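/- Let ω, γ > 0 and let U_∞, W_∞, Z_∞ > 0 be constants satisfying Z_∞ = U_∞ W_∞. Then there exists a constant C > 0, depending only on ω, γ, U_∞, W_∞, Z_∞, such that for all real numbers a, b, c ≥ 0 satisfying ω a² + γ c² = ω U_∞² + γ Z_∞² and b² + c² = W_∞² + Z_∞², one has (a − U_∞)² + (b − W_∞)² + (c − Z_∞)² ≤ C (ab − c)². -/
import Mathlib

set_option maxHeartbeats 1000000 in
/-- Lemma 5.2 of the paper: quadratic control of the distance of `(a,b,c)` to the
equilibrium square roots `(Usq, Wsq, Zsq)` (with `Zsq = Usq * Wsq`) by `(ab - c)²`,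
under the two conservation-law constraints. -/
theorem equilibrium_constants_bound (ω γ Usq Wsq Zsq : ℝ)
    (hω : 0 < ω) (hγ : 0 < γ)
    (hU : 0 < Usq) (hW : 0 < Wsq) (hZ : 0 < Zsq) (hZUW : Zsq = Usq * Wsq) :
    ∃ C > 0, ∀ a b c : ℝ, 0 ≤ a → 0 ≤ b → 0 ≤ c →
      ω * a ^ 2 + γ * c ^ 2 = ω * Usq ^ 2 + γ * Zsq ^ 2 →
      b ^ 2 + c ^ 2 = Wsq ^ 2 + Zsq ^ 2 →
      (a - Usq) ^ 2 + (b - Wsq) ^ 2 + (c - Zsq) ^ 2 ≤ C * (a * b - c) ^ 2 := by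
  refine ⟨(γ^2/(ω^2*Usq^2) + 1/Wsq^2 + 1/Zsq^2) * (4*Zsq^2 + 2*Wsq^2), by positivity, ?_⟩
  intro a b c ha hb hc h1 h2
  set t := Zsq^2 - c^2 with ht
  have hb2 : b^2 = Wsq^2 + t := by rw [ht]; linarith
  have ha2 : ω * a^2 = ω * Usq^2 + γ * t := by rw [ht]; linarith
  -- bound for a
  have ea : (a - Usq) * (a + Usq) * ω = γ * t := by linear_combination ha2
  have h_a : (a - Usq)^2 ≤ γ^2/(ω^2*Usq^2) * t^2 := by
    rw [div_mul_eq_mul_div, le_div_iff₀ (by positivity)]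
    have ea2 : ((a - Usq) * (a + Usq) * ω)^2 = (γ * t)^2 := by rw [ea]
    nlinarith [ea2, sq_nonneg ((a - Usq)*ω*a),
      mul_nonneg (sq_nonneg ((a - Usq)*ω)) (mul_nonneg ha hU.le)]
  -- bound for b
  have eb : (b - Wsq) * (b + Wsq) = t := by linear_combination hb2
  have h_b : (b - Wsq)^2 ≤ 1/Wsq^2 * t^2 := by
    rw [div_mul_eq_mul_div, le_div_iff₀ (by positivity), one_mul]
    have eb2 : ((b - Wsq) * (b + Wsq))^2 = t^2 := by rw [eb]
    nlinarith [eb2, sq_nonneg ((b - Wsq)*b),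
      mul_nonneg (sq_nonneg (b - Wsq)) (mul_nonneg hb hW.le)]
  -- bound for c
  have ec : (c - Zsq) * (c + Zsq) = -t := by rw [ht]; ring
  have h_c : (c - Zsq)^2 ≤ 1/Zsq^2 * t^2 := by
    rw [div_mul_eq_mul_div, le_div_iff₀ (by positivity), one_mul]
    have ec2 : ((c - Zsq) * (c + Zsq))^2 = t^2 := by rw [ec]; ring
    nlinarith [ec2, sq_nonneg ((c - Zsq)*c),
      mul_nonneg (sq_nonneg (c - Zsq)) (mul_nonneg hc hZ.le)]
  -- key lower bound on (a*b - c)^2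
  have hc2 : c^2 ≤ Zsq^2 + Wsq^2 := by linarith [sq_nonneg b]
  have hP : 0 < (a*b + Usq*Wsq) * ω :=
    mul_pos (add_pos_of_nonneg_of_pos (mul_nonneg ha hb) (mul_pos hU hW)) hω
  have hprod : (a*b - Usq*Wsq) * (a*b + Usq*Wsq) * ω = t * (ω*Usq^2 + γ*b^2) := by
    linear_combination b^2 * ha2 + ω * Usq^2 * hb2
  have hSQ : (Zsq + c) * (a*b - c) * ((a*b + Usq*Wsq) * ω)
      = t * ((a*b + Usq*Wsq)*ω + (Zsq + c) * (ω*Usq^2 + γ*b^2)) := by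
    linear_combination (Zsq + c) * hprod
      - (a*b + Usq*Wsq) * ω * (Zsq + c) * hZUW - (a*b + Usq*Wsq) * ω * ht
  have hQP : (a*b + Usq*Wsq)*ω ≤ (a*b + Usq*Wsq)*ω + (Zsq + c) * (ω*Usq^2 + γ*b^2) := by
    have h0 : 0 ≤ (Zsq + c) * (ω*Usq^2 + γ*b^2) :=
      mul_nonneg (by linarith) (by positivity)
    linarith
  have ht2 : t^2 ≤ ((Zsq + c) * (a*b - c))^2 := by
    have hsq : ((Zsq + c) * (a*b - c) * ((a*b + Usq*Wsq) * ω))^2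
        = (t * ((a*b + Usq*Wsq)*ω + (Zsq + c) * (ω*Usq^2 + γ*b^2)))^2 := by rw [hSQ]
    nlinarith [hsq, mul_pos hP hP,
      mul_nonneg (mul_nonneg (sq_nonneg t) (sub_nonneg.2 hQP)) (by linarith : (0:ℝ) ≤ (a*b + Usq*Wsq)*ω + ((a*b + Usq*Wsq)*ω + (Zsq + c) * (ω*Usq^2 + γ*b^2)))]
  have h4 : (Zsq + c)^2 ≤ 4*Zsq^2 + 2*Wsq^2 := by nlinarith [hc2, sq_nonneg (Zsq - c)]
  have ht3 : ((Zsq + c) * (a*b - c))^2 ≤ (4*Zsq^2 + 2*Wsq^2) * (a*b - c)^2 := by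
    calc ((Zsq + c) * (a*b - c))^2 = (Zsq + c)^2 * (a*b - c)^2 := by ring
      _ ≤ (4*Zsq^2 + 2*Wsq^2) * (a*b - c)^2 :=
        mul_le_mul_of_nonneg_right h4 (sq_nonneg _)
  have hK : (0:ℝ) ≤ γ^2/(ω^2*Usq^2) + 1/Wsq^2 + 1/Zsq^2 := by positivity
  have hfin : (γ^2/(ω^2*Usq^2) + 1/Wsq^2 + 1/Zsq^2) * t^2
      ≤ (γ^2/(ω^2*Usq^2) + 1/Wsq^2 + 1/Zsq^2) * ((4*Zsq^2 + 2*Wsq^2) * (a*b - c)^2) :=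
    mul_le_mul_of_nonneg_left (ht2.trans ht3) hK
  linarith [h_a, h_b, h_c, hfin]
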